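/- arXiv:2006.01468 — 3 statements merged into one kernel-verified Lean document; each statement's English description precedes it below -/
import Mathlib

section
/- For every u in the enlarged Bargmann-Fock space Ẽ and all 1 ≤ p ≤ q ≤ ∞, there is a constant C (independent of u) such that ‖u‖_{L^q(ℂ)} ≤ C ‖u‖_{L^p(ℂ)}. In particular ‖u‖_{L^∞(ℂ)} ≤ (1/√π)‖u‖_{L²(ℂ)} for u ∈ E. -/
open MeasureTheory Complex ENNReal

noncomputable section

/-- Membership in the enlarged Bargmann-Fock space Ẽ: u = f e^{-|z|²/2} with f entire. -/
def tildeE (u : ℂ → ℂ) : Prop :=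
  ∃ f : ℂ → ℂ, Differentiable ℂ f ∧
    ∀ z, u z = f z * Complex.exp (-((‖z‖ ^ 2 : ℝ) : ℂ) / 2)

namespace BargmannFock

open Set

/-! ### Mean value inequality on circles -/

lemma circle_mean (f : ℂ → ℂ) (hf : Differentiable ℂ f) {r : ℝ} (hr : 0 < r) :
    2 * Real.pi * ‖f 0‖ ≤ ∫ θ in (0:ℝ)..(2*Real.pi), ‖f (circleMap 0 r θ)‖ := by
  have hC : (∮ z in C(0, r), (z - 0)⁻¹ • f z) = (2 * Real.pi * I : ℂ) • f 0 :=
    (hf.diffContOnCl).circleIntegral_sub_inv_smul (by simpa using hr)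
  have h2 : (∮ z in C(0, r), (z - 0)⁻¹ • f z)
      = ∫ θ in (0:ℝ)..(2*Real.pi), I * f (circleMap 0 r θ) := by
    rw [circleIntegral]
    congr 1
    ext θ
    have hne : circleMap 0 r θ ≠ 0 := circleMap_ne_center hr.ne'
    simp [deriv_circleMap, smul_eq_mul]
    field_simp
  have h3 : (2 * Real.pi * I : ℂ) • f 0 = I * ∫ θ in (0:ℝ)..(2*Real.pi), f (circleMap 0 r θ) := by
    rw [hC] at h2
    rw [h2, intervalIntegral.integral_const_mul]
  have h4 : 2 * Real.pi * ‖f 0‖ = ‖∫ θ in (0:ℝ)..(2*Real.pi), f (circleMap 0 r θ)‖ := by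
    have := congrArg norm h3
    simpa [norm_smul, abs_of_pos Real.pi_pos, mul_assoc] using this
  rw [h4]
  exact intervalIntegral.norm_integral_le_integral_norm (by positivity)

lemma circle_mean' (f : ℂ → ℂ) (hf : Differentiable ℂ f) {r : ℝ} (hr : 0 < r) :
    ENNReal.ofReal (2 * Real.pi * ‖f 0‖)
      ≤ ∫⁻ θ in Ioo (-Real.pi) Real.pi, ENNReal.ofReal ‖f (circleMap 0 r θ)‖ := by
  have hcont : Continuous fun θ : ℝ => ‖f (circleMap 0 r θ)‖ :=
    (hf.continuous.comp (continuous_circleMap 0 r)).norm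
  have hper : Function.Periodic (fun θ : ℝ => ‖f (circleMap 0 r θ)‖) (2 * Real.pi) :=
    fun θ => by simp [(periodic_circleMap 0 r) θ]
  have heq : (∫ θ in (0:ℝ)..(2*Real.pi), ‖f (circleMap 0 r θ)‖)
      = ∫ θ in Ioo (-Real.pi) Real.pi, ‖f (circleMap 0 r θ)‖ := by
    have h1 := hper.intervalIntegral_add_eq (-Real.pi) 0
    have h2 : -Real.pi + 2 * Real.pi = Real.pi := by ring
    rw [h2] at h1
    rw [← zero_add (2*Real.pi), ← h1,
      intervalIntegral.integral_of_le (by linarith [Real.pi_pos]),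
      ← MeasureTheory.integral_Ioc_eq_integral_Ioo]
  have hint : IntegrableOn (fun θ : ℝ => ‖f (circleMap 0 r θ)‖) (Ioo (-Real.pi) Real.pi) :=
    (hcont.integrableOn_Icc (a := -Real.pi) (b := Real.pi)).mono_set Ioo_subset_Icc_self
  rw [← ofReal_integral_eq_lintegral_ofReal hint
    (Filter.Eventually.of_forall fun θ => norm_nonneg _), ← heq]
  exact ENNReal.ofReal_le_ofReal (circle_mean f hf hr)

/-! ### A lower bound via polar coordinates -/

lemma lintegral_polar_le (g : ℝ × ℝ → ℝ≥0∞) :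
    ∫⁻ p in polarCoord.target, ENNReal.ofReal p.1 * g (polarCoord.symm p) ≤ ∫⁻ p, g p := by
  set B : ℝ × ℝ → ℝ × ℝ →L[ℝ] ℝ × ℝ := fun p =>
    LinearMap.toContinuousLinearMap (Matrix.toLin (Module.Basis.finTwoProd ℝ) (Module.Basis.finTwoProd ℝ)
      !![Real.cos p.2, -p.1 * Real.sin p.2; Real.sin p.2, p.1 * Real.cos p.2])
  have A : ∀ p ∈ polarCoord.target, HasFDerivWithinAt polarCoord.symm (B p) polarCoord.target p :=
    fun p _ => (hasFDerivAt_polarCoord_symm p).hasFDerivWithinAt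
  have B_det : ∀ p, (B p).det = p.1 := by
    intro p
    conv_rhs => rw [← one_mul p.1, ← Real.cos_sq_add_sin_sq p.2]
    simp only [B, neg_mul, LinearMap.det_toContinuousLinearMap, LinearMap.det_toLin,
      Matrix.det_fin_two_of, sub_neg_eq_add]
    ring
  have hinj : Set.InjOn polarCoord.symm polarCoord.target := by
    have := polarCoord.symm.injOn
    rwa [OpenPartialHomeomorph.symm_source] at this
  have himg : polarCoord.symm '' polarCoord.target = polarCoord.source :=
    polarCoord.symm_image_target_eq_source
  calc ∫⁻ p in polarCoord.target, ENNReal.ofReal p.1 * g (polarCoord.symm p)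
      = ∫⁻ p in polarCoord.target, ENNReal.ofReal |(B p).det| * g (polarCoord.symm p) := by
        refine setLIntegral_congr_fun polarCoord.open_target.measurableSet
          (fun p hp => ?_)
        rw [B_det, abs_of_pos hp.1]
    _ = ∫⁻ p in polarCoord.symm '' polarCoord.target, g p :=
        (lintegral_image_eq_lintegral_abs_det_fderiv_mul volume
          polarCoord.open_target.measurableSet A hinj g).symm
    _ ≤ ∫⁻ p, g p := by rw [himg]; exact setLIntegral_le_lintegral _ _

lemma radial_gauss : ∫ r in Ioi (0:ℝ), r * Real.exp (-r^2) = 1/2 := by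
  have h := integral_mul_cexp_neg_mul_sq (b := (1:ℂ)) (by norm_num)
  have h2 : ∫ r in Ioi (0:ℝ), ((r * Real.exp (-r^2) : ℝ) : ℂ)
      = ((∫ r in Ioi (0:ℝ), r * Real.exp (-r^2) : ℝ) : ℂ) := integral_ofReal
  have h3 : ∀ r : ℝ, ((r * Real.exp (-r^2) : ℝ) : ℂ) = (r : ℂ) * Complex.exp (-1 * (r:ℂ)^2) := by
    intro r
    push_cast [Complex.ofReal_exp]
    ring_nf
  rw [show (fun r : ℝ => ((r * Real.exp (-r^2) : ℝ) : ℂ))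
    = fun r : ℝ => (r:ℂ) * Complex.exp (-1 * (r:ℂ)^2) from funext h3] at h2
  rw [h] at h2
  have := h2.symm
  have h4 : ((∫ r in Ioi (0:ℝ), r * Real.exp (-r^2) : ℝ) : ℂ) = ((1/2 : ℝ) : ℂ) := by
    rw [this]; norm_num
  exact_mod_cast h4

lemma lintegral_radial_gauss :
    ∫⁻ r in Ioi (0:ℝ), ENNReal.ofReal (r * Real.exp (-r^2)) = ENNReal.ofReal (1/2) := by
  rw [← ofReal_integral_eq_lintegral_ofReal, radial_gauss]
  · have : (fun r : ℝ => r * Real.exp (-r^2)) = fun r : ℝ => r * Real.exp (-1 * r^2) := by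
      funext r; ring_nf
    rw [this]
    exact (integrable_mul_exp_neg_mul_sq (by norm_num : (0:ℝ) < 1)).integrableOn
  · filter_upwards [ae_restrict_mem measurableSet_Ioi] with r hr
    have : (0:ℝ) < r := hr
    positivity

/-- The fundamental mean-value estimate at the origin, with the Gaussian weight. -/
lemma key0 (f : ℂ → ℂ) (hf : Differentiable ℂ f) :
    ENNReal.ofReal (Real.pi * ‖f 0‖)
      ≤ ∫⁻ z : ℂ, ENNReal.ofReal (‖f z‖ * Real.exp (-‖z‖^2)) := by
  set G : ℂ → ℝ≥0∞ := fun z => ENNReal.ofReal (‖f z‖ * Real.exp (-‖z‖^2)) with hG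
  have hGcont : Continuous fun z : ℂ => ‖f z‖ * Real.exp (-‖z‖^2) :=
    (hf.continuous.norm).mul (Real.continuous_exp.comp (continuous_norm.pow 2).neg)
  have hGmeas : Measurable G := ENNReal.measurable_ofReal.comp hGcont.measurable
  have h1 : ∫⁻ z : ℂ, G z = ∫⁻ p : ℝ × ℝ, G (Complex.measurableEquivRealProd.symm p) := by
    rw [← (Complex.volume_preserving_equiv_real_prod.symm).lintegral_comp hGmeas]
  have hsymm : ∀ p : ℝ × ℝ, Complex.measurableEquivRealProd.symm (polarCoord.symm p)
      = circleMap 0 p.1 p.2 := by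
    intro p
    apply Complex.ext <;>
      simp [Complex.measurableEquivRealProd_symm_apply, circleMap, Complex.exp_mul_I,
        Complex.cos_ofReal_re, Complex.sin_ofReal_re]
  have h2 : ∫⁻ p in polarCoord.target,
      ENNReal.ofReal p.1 * G (circleMap 0 p.1 p.2) ≤ ∫⁻ z : ℂ, G z := by
    rw [h1]
    have := lintegral_polar_le (fun p => G (Complex.measurableEquivRealProd.symm p))
    refine le_trans (le_of_eq ?_) this
    refine setLIntegral_congr_fun polarCoord.open_target.measurableSet
      (fun p _ => ?_)
    rw [hsymm]
  refine le_trans ?_ h2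
  have htarget : polarCoord.target = Ioi (0:ℝ) ×ˢ Ioo (-Real.pi) Real.pi := rfl
  have hFmeas : Measurable fun p : ℝ × ℝ => ENNReal.ofReal p.1 * G (circleMap 0 p.1 p.2) := by
    have hcm : Continuous fun p : ℝ × ℝ => circleMap 0 p.1 p.2 := by
      simp only [circleMap, zero_add]
      exact (Complex.continuous_ofReal.comp continuous_fst).mul
        (Complex.continuous_exp.comp ((Complex.continuous_ofReal.comp continuous_snd).mul
          continuous_const))
    exact (ENNReal.measurable_ofReal.comp (continuous_fst.measurable)).mul
      (hGmeas.comp hcm.measurable)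
  rw [htarget, Measure.volume_eq_prod, ← Measure.prod_restrict,
    lintegral_prod _ hFmeas.aemeasurable]
  have inner : ∀ r ∈ Ioi (0:ℝ),
      ENNReal.ofReal (r * Real.exp (-r^2)) * ENNReal.ofReal (2 * Real.pi * ‖f 0‖)
        ≤ ∫⁻ θ in Ioo (-Real.pi) Real.pi, ENNReal.ofReal r * G (circleMap 0 r θ) := by
    intro r hr
    have hr' : (0:ℝ) < r := hr
    have hGval : ∀ θ : ℝ, G (circleMap 0 r θ)
        = ENNReal.ofReal (r * Real.exp (-r^2))⁻¹ * 0
          + ENNReal.ofReal (Real.exp (-r^2)) * ENNReal.ofReal ‖f (circleMap 0 r θ)‖ := by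
      intro θ
      rw [hG]
      simp only [zero_mul, mul_zero, zero_add]
      rw [← ENNReal.ofReal_mul (Real.exp_pos _).le]
      congr 1
      have : ‖circleMap 0 r θ‖ = r := by
        rw [norm_circleMap_zero, abs_of_pos hr']
      rw [this]; ring
    calc ENNReal.ofReal (r * Real.exp (-r^2)) * ENNReal.ofReal (2 * Real.pi * ‖f 0‖)
        ≤ ENNReal.ofReal (r * Real.exp (-r^2)) *
            ∫⁻ θ in Ioo (-Real.pi) Real.pi, ENNReal.ofReal ‖f (circleMap 0 r θ)‖ :=
          mul_le_mul_right (circle_mean' f hf hr') _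
      _ = ∫⁻ θ in Ioo (-Real.pi) Real.pi, ENNReal.ofReal r * G (circleMap 0 r θ) := by
          have hm : Measurable fun θ : ℝ => ENNReal.ofReal ‖f (circleMap 0 r θ)‖ :=
            ENNReal.measurable_ofReal.comp
              ((hf.continuous.comp (continuous_circleMap 0 r)).norm.measurable)
          rw [← lintegral_const_mul _ hm]
          refine lintegral_congr fun θ => ?_
          rw [hGval θ]
          simp only [zero_mul, mul_zero, zero_add, ← mul_assoc]
          congr 1
          rw [ENNReal.ofReal_mul hr'.le, mul_comm]
  calc ENNReal.ofReal (Real.pi * ‖f 0‖)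
      = ENNReal.ofReal (1/2) * ENNReal.ofReal (2 * Real.pi * ‖f 0‖) := by
        rw [← ENNReal.ofReal_mul (by norm_num)]
        congr 1; ring
    _ = ∫⁻ r in Ioi (0:ℝ), ENNReal.ofReal (r * Real.exp (-r^2))
          * ENNReal.ofReal (2 * Real.pi * ‖f 0‖) := by
        rw [lintegral_mul_const _ (by fun_prop), lintegral_radial_gauss]
    _ ≤ ∫⁻ r in Ioi (0:ℝ), ∫⁻ θ in Ioo (-Real.pi) Real.pi,
          ENNReal.ofReal r * G (circleMap 0 r θ) :=
        setLIntegral_mono' measurableSet_Ioi inner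

/-! ### Translation to an arbitrary point -/

lemma habs (ζ : ℂ) : ‖ζ‖^2 = ζ.re^2 + ζ.im^2 := by
  rw [Complex.sq_norm, Complex.normSq_apply]; ring

lemma master {u : ℂ → ℂ} (hu : tildeE u) (z : ℂ) :
    ENNReal.ofReal (Real.pi * ‖u z‖)
      ≤ ∫⁻ w : ℂ, ENNReal.ofReal (‖u (z + w)‖ * Real.exp (-‖w‖^2 / 2)) := by
  obtain ⟨f, hf, hfu⟩ := hu
  set g : ℂ → ℂ := fun w =>
    f (z + w) * Complex.exp (-(w * (starRingEnd ℂ) z) - ((‖z‖ ^ 2 : ℝ) : ℂ) / 2) with hgdef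
  have hg : Differentiable ℂ g := by
    apply Differentiable.mul
    · exact hf.comp (differentiable_id.const_add z)
    · exact Complex.differentiable_exp.comp
        (((differentiable_id.mul_const _).neg).sub_const _)
  have hre : ∀ w : ℂ, (-(w * (starRingEnd ℂ) z) - ((‖z‖ ^ 2 : ℝ) : ℂ) / 2).re
      = -(w.re * z.re + w.im * z.im) - ‖z‖^2 / 2 := by
    intro w
    have hc : ((‖z‖ ^ 2 : ℝ) : ℂ) / 2 = ((‖z‖ ^ 2 / 2 : ℝ) : ℂ) := by push_cast; ring
    rw [Complex.sub_re, Complex.neg_re, Complex.mul_re, hc, Complex.ofReal_re,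
      Complex.conj_re, Complex.conj_im]
    ring
  have hnormg : ∀ w : ℂ, ‖g w‖
      = ‖f (z + w)‖ * Real.exp (-(w.re * z.re + w.im * z.im) - ‖z‖^2 / 2) := by
    intro w
    rw [hgdef]
    simp only [norm_mul]
    congr 1
    rw [Complex.norm_exp, hre]
  have hnormu : ∀ ζ : ℂ, ‖u ζ‖ = ‖f ζ‖ * Real.exp (-(‖ζ‖^2) / 2) := by
    intro ζ
    rw [hfu ζ]
    simp only [norm_mul]
    congr 1
    rw [Complex.norm_exp]
    congr 1
    have hc : -((‖ζ‖ ^ 2 : ℝ) : ℂ) / 2 = ((-‖ζ‖ ^ 2 / 2 : ℝ) : ℂ) := by push_cast; ring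
    rw [hc, Complex.ofReal_re]
  have hg0 : ‖g 0‖ = ‖u z‖ := by
    rw [hnormg 0, hnormu z]
    norm_num
    exact Or.inl (by ring)
  calc ENNReal.ofReal (Real.pi * ‖u z‖)
      = ENNReal.ofReal (Real.pi * ‖g 0‖) := by rw [hg0]
    _ ≤ ∫⁻ w : ℂ, ENNReal.ofReal (‖g w‖ * Real.exp (-‖w‖^2)) := key0 g hg
    _ = ∫⁻ w : ℂ, ENNReal.ofReal (‖u (z + w)‖ * Real.exp (-‖w‖^2 / 2)) := by
        refine lintegral_congr fun w => ?_
        rw [hnormg w, hnormu (z + w)]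
        rw [mul_assoc, mul_assoc, ← Real.exp_add, ← Real.exp_add]
        have h1 := habs (z + w)
        have h2 := habs z
        have h3 := habs w
        simp only [Complex.add_re, Complex.add_im] at h1
        rw [h1, h2, h3]
        ring_nf

/-! ### The Gaussian integral over ℂ -/

lemma gauss_lintegral {c : ℝ} (hc : 0 < c) :
    ∫⁻ z : ℂ, ENNReal.ofReal (Real.exp (-c * ‖z‖^2)) = ENNReal.ofReal (Real.pi / c) := by
  have hmeas : Measurable fun z : ℂ => ENNReal.ofReal (Real.exp (-c * ‖z‖^2)) := by
    exact ENNReal.measurable_ofReal.comp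
      (Real.continuous_exp.comp (continuous_const.mul (continuous_norm.pow 2))).measurable
  have h1 : ∫⁻ z : ℂ, ENNReal.ofReal (Real.exp (-c * ‖z‖^2))
      = ∫⁻ p : ℝ × ℝ, ENNReal.ofReal (Real.exp (-c * p.1^2))
          * ENNReal.ofReal (Real.exp (-c * p.2^2)) := by
    rw [← (Complex.volume_preserving_equiv_real_prod.symm).lintegral_comp hmeas]
    refine lintegral_congr fun p => ?_
    have hn : ‖Complex.measurableEquivRealProd.symm p‖^2 = p.1^2 + p.2^2 := by
      rw [Complex.measurableEquivRealProd_symm_apply, Complex.sq_norm,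
        Complex.normSq_mk]
      ring
    rw [hn, ← ENNReal.ofReal_mul (Real.exp_pos _).le, ← Real.exp_add]
    ring_nf
  rw [h1, Measure.volume_eq_prod, lintegral_prod _ (by fun_prop)]
  have hgauss : ∫⁻ x : ℝ, ENNReal.ofReal (Real.exp (-c * x^2))
      = ENNReal.ofReal (Real.sqrt (Real.pi / c)) := by
    rw [← ofReal_integral_eq_lintegral_ofReal (integrable_exp_neg_mul_sq hc)
      (Filter.Eventually.of_forall fun x => (Real.exp_pos _).le), integral_gaussian]
  have hrow : ∀ x : ℝ, ∫⁻ y : ℝ, ENNReal.ofReal (Real.exp (-c * x^2))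
        * ENNReal.ofReal (Real.exp (-c * y^2))
      = ENNReal.ofReal (Real.exp (-c * x^2)) * ENNReal.ofReal (Real.sqrt (Real.pi / c)) := by
    intro x
    rw [lintegral_const_mul _ (by fun_prop), hgauss]
  simp_rw [hrow]
  rw [lintegral_mul_const _ (by fun_prop), hgauss, ← ENNReal.ofReal_mul (Real.sqrt_nonneg _),
    Real.mul_self_sqrt (by positivity)]

/-! ### Pointwise bounds by Lᵖ norms -/

lemma tildeE_continuous {u : ℂ → ℂ} (hu : tildeE u) : Continuous u := by
  obtain ⟨f, hf, hfu⟩ := hu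
  have : u = fun z => f z * Complex.exp (-((‖z‖ ^ 2 : ℝ) : ℂ) / 2) := funext hfu
  rw [this]
  exact hf.continuous.mul (Complex.continuous_exp.comp
    (((Complex.continuous_ofReal.comp (continuous_norm.pow 2)).neg).div_const 2))

lemma div_pi_le {x : ℝ} {B : ℝ≥0∞} (h : ENNReal.ofReal (Real.pi * x) ≤ B) :
    ENNReal.ofReal x ≤ ENNReal.ofReal Real.pi⁻¹ * B := by
  have h2 := mul_le_mul_right h (ENNReal.ofReal Real.pi⁻¹)
  refine le_trans (le_of_eq ?_) h2
  rw [← ENNReal.ofReal_mul (by positivity)]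
  congr 1
  rw [← mul_assoc, inv_mul_cancel₀ Real.pi_ne_zero, one_mul]

lemma sup_bound_one {u : ℂ → ℂ} (hu : tildeE u) (z : ℂ) :
    (‖u z‖₊ : ℝ≥0∞) ≤ ENNReal.ofReal Real.pi⁻¹ * eLpNorm u 1 volume := by
  rw [← enorm_eq_nnnorm, ← ofReal_norm]
  refine div_pi_le (le_trans (master hu z) ?_)
  rw [eLpNorm_one_eq_lintegral_enorm,
    ← lintegral_add_left_eq_self (fun x : ℂ => ‖u x‖ₑ) z]
  refine lintegral_mono fun w => ?_
  rw [← ofReal_norm]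
  refine ENNReal.ofReal_le_ofReal ?_
  calc ‖u (z + w)‖ * Real.exp (-‖w‖^2/2) ≤ ‖u (z + w)‖ * 1 := by
        refine mul_le_mul_of_nonneg_left ?_ (norm_nonneg _)
        exact Real.exp_le_one_iff.mpr (by nlinarith [sq_nonneg ‖w‖])
      _ = ‖u (z + w)‖ := mul_one _

lemma sup_bound_gen {u : ℂ → ℂ} (hu : tildeE u) {pr qr : ℝ} (hpq : pr.HolderConjugate qr)
    (z : ℂ) :
    (‖u z‖₊ : ℝ≥0∞) ≤ ENNReal.ofReal Real.pi⁻¹ * ENNReal.ofReal (Real.pi / (qr / 2)) ^ (1/qr)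
      * eLpNorm u (ENNReal.ofReal pr) volume := by
  have hq0 : 0 < qr := hpq.symm.pos
  have hucont := tildeE_continuous hu
  suffices h : ENNReal.ofReal ‖u z‖ ≤ ENNReal.ofReal Real.pi⁻¹ *
      (eLpNorm u (ENNReal.ofReal pr) volume * ENNReal.ofReal (Real.pi / (qr/2)) ^ (1/qr)) by
    rw [← enorm_eq_nnnorm, ← ofReal_norm]
    refine h.trans (le_of_eq ?_)
    ring
  refine div_pi_le (le_trans (master hu z) ?_)
  set F : ℂ → ℝ≥0∞ := fun w => (‖u (z + w)‖₊ : ℝ≥0∞) with hF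
  set W : ℂ → ℝ≥0∞ := fun w => ENNReal.ofReal (Real.exp (-‖w‖^2 / 2)) with hW
  have hFmeas : AEMeasurable F volume := by
    refine Measurable.aemeasurable ?_
    exact (measurable_coe_nnreal_ennreal.comp
      ((hucont.comp (continuous_const.add continuous_id)).nnnorm.measurable))
  have hWmeas : AEMeasurable W volume := by
    refine Measurable.aemeasurable ?_
    exact ENNReal.measurable_ofReal.comp
      (Real.continuous_exp.comp ((continuous_norm.pow 2).neg.div_const 2)).measurable
  have h1 : ∫⁻ w : ℂ, ENNReal.ofReal (‖u (z + w)‖ * Real.exp (-‖w‖^2 / 2))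
      = ∫⁻ w : ℂ, (F * W) w := by
    refine lintegral_congr fun w => ?_
    rw [ENNReal.ofReal_mul (norm_nonneg _)]
    simp only [hF, hW, Pi.mul_apply, ofReal_norm, enorm_eq_nnnorm]
  rw [h1]
  refine le_trans (ENNReal.lintegral_mul_le_Lp_mul_Lq volume hpq hFmeas hWmeas) ?_
  have hFp : (∫⁻ w : ℂ, F w ^ pr) ^ (1/pr) = eLpNorm u (ENNReal.ofReal pr) volume := by
    rw [eLpNorm_eq_lintegral_rpow_enorm_toReal (by simp [hpq.pos] : ENNReal.ofReal pr ≠ 0)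
      ENNReal.ofReal_ne_top, ENNReal.toReal_ofReal hpq.nonneg]
    congr 1
    exact lintegral_add_left_eq_self (fun x : ℂ => (‖u x‖₊ : ℝ≥0∞) ^ pr) z
  have hWq : (∫⁻ w : ℂ, W w ^ qr) ^ (1/qr) = ENNReal.ofReal (Real.pi / (qr/2)) ^ (1/qr) := by
    congr 1
    rw [← gauss_lintegral (by positivity : (0:ℝ) < qr/2)]
    refine lintegral_congr fun w => ?_
    show ENNReal.ofReal (Real.exp (-‖w‖ ^ 2 / 2)) ^ qr = _
    rw [ENNReal.ofReal_rpow_of_nonneg (Real.exp_pos _).le hq0.le, ← Real.exp_mul]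
    congr 2
    ring
  rw [hFp, hWq, mul_comm]

/-! ### From pointwise bounds to Lᵠ bounds -/

lemma eLpNorm_top_le {u : ℂ → ℂ} {C : ℝ≥0∞} (h : ∀ z, (‖u z‖₊ : ℝ≥0∞) ≤ C) :
    eLpNorm u ⊤ volume ≤ C := by
  rw [eLpNorm_exponent_top, eLpNormEssSup]
  exact essSup_le_of_ae_le _ (Filter.Eventually.of_forall h)

lemma interp {u : ℂ → ℂ} {K : ℝ≥0∞} (hK : K ≠ ⊤) {pr qr : ℝ} (hpr : 0 < pr)
    (hpq : pr < qr)
    (hA : eLpNorm u (ENNReal.ofReal pr) volume ≠ ⊤)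
    (hsup : ∀ z, (‖u z‖₊ : ℝ≥0∞) ≤ K * eLpNorm u (ENNReal.ofReal pr) volume) :
    eLpNorm u (ENNReal.ofReal qr) volume
      ≤ K ^ ((qr - pr)/qr) * eLpNorm u (ENNReal.ofReal pr) volume := by
  have hqr : 0 < qr := hpr.trans hpq
  set A := eLpNorm u (ENNReal.ofReal pr) volume with hAdef
  set B := K * A with hBdef
  have hB_ne_top : B ≠ ⊤ := ENNReal.mul_ne_top hK hA
  have hApow : ∫⁻ z : ℂ, (‖u z‖₊ : ℝ≥0∞) ^ pr = A ^ pr := by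
    rw [hAdef, eLpNorm_eq_lintegral_rpow_enorm_toReal (by simp [hpr] : ENNReal.ofReal pr ≠ 0)
      ENNReal.ofReal_ne_top, ENNReal.toReal_ofReal hpr.le, ← ENNReal.rpow_mul,
      one_div, inv_mul_cancel₀ hpr.ne', ENNReal.rpow_one]
    rfl
  have hq_ne : ENNReal.ofReal qr ≠ 0 := by simp [hqr]
  rw [eLpNorm_eq_lintegral_rpow_enorm_toReal hq_ne ENNReal.ofReal_ne_top,
    ENNReal.toReal_ofReal hqr.le]
  have hpoint : ∀ z : ℂ, (‖u z‖₊ : ℝ≥0∞) ^ qr ≤ B ^ (qr - pr) * (‖u z‖₊ : ℝ≥0∞) ^ pr := by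
    intro z
    have : (‖u z‖₊ : ℝ≥0∞) ^ qr = (‖u z‖₊ : ℝ≥0∞) ^ (qr - pr) * (‖u z‖₊ : ℝ≥0∞) ^ pr := by
      rw [← ENNReal.rpow_add_of_nonneg _ _ (by linarith) hpr.le, sub_add_cancel]
    rw [this]
    exact mul_le_mul_left (ENNReal.rpow_le_rpow (hsup z) (by linarith)) _
  have hint : ∫⁻ z : ℂ, (‖u z‖₊ : ℝ≥0∞) ^ qr ≤ B ^ (qr - pr) * A ^ pr := by
    refine le_trans (lintegral_mono hpoint) ?_
    rw [lintegral_const_mul' _ _ (ENNReal.rpow_ne_top_of_nonneg (by linarith) hB_ne_top), hApow]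
  calc (∫⁻ z : ℂ, (‖u z‖₊ : ℝ≥0∞) ^ qr) ^ (1/qr)
      ≤ (B ^ (qr - pr) * A ^ pr) ^ (1/qr) := ENNReal.rpow_le_rpow hint (by positivity)
    _ = B ^ ((qr - pr)/qr) * A ^ (pr/qr) := by
        rw [ENNReal.mul_rpow_of_nonneg _ _ (by positivity), ← ENNReal.rpow_mul,
          ← ENNReal.rpow_mul]
        congr 1 <;> congr 1 <;> field_simp
    _ = K ^ ((qr - pr)/qr) * (A ^ ((qr - pr)/qr) * A ^ (pr/qr)) := by
        rw [hBdef, ENNReal.mul_rpow_of_nonneg _ _ (by apply div_nonneg <;> linarith)]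
        ring
    _ = K ^ ((qr - pr)/qr) * A := by
        rw [← ENNReal.rpow_add_of_nonneg _ _ (by apply div_nonneg <;> linarith) (by positivity)]
        congr 1
        rw [← add_div, sub_add_cancel, div_self hqr.ne', ENNReal.rpow_one]

end BargmannFock

open BargmannFock

/-- Hypercontractivity: for 1 ≤ p ≤ q ≤ ∞ there is C with ‖u‖_{L^q} ≤ C‖u‖_{L^p} for
all u ∈ Ẽ; in particular ‖u‖_{L^∞} ≤ π^{-1/2} ‖u‖_{L²} for u ∈ E. -/
theorem stmt3 :
    (∀ p q : ℝ≥0∞, 1 ≤ p → p ≤ q →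
      ∃ C : ℝ≥0∞, C ≠ ⊤ ∧ ∀ u : ℂ → ℂ, tildeE u →
        eLpNorm u q volume ≤ C * eLpNorm u p volume)
    ∧ ∀ u : ℂ → ℂ, tildeE u → MemLp u 2 volume →
        eLpNorm u ⊤ volume
          ≤ ENNReal.ofReal (1 / Real.sqrt Real.pi) * eLpNorm u 2 volume := by
  constructor
  · intro p q hp hpq
    by_cases hpq_eq : p = q
    · exact ⟨1, one_ne_top, fun u _ => by rw [hpq_eq, one_mul]⟩
    have hplt : p < q := hpq.lt_of_ne hpq_eq
    have hp_top : p ≠ ⊤ := hplt.ne_top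
    have hpr1 : 1 ≤ p.toReal := by
      have := ENNReal.toReal_mono hp_top hp
      simpa using this
    -- a uniform pointwise bound
    obtain ⟨K, hK, hsup⟩ : ∃ K : ℝ≥0∞, K ≠ ⊤ ∧ ∀ u : ℂ → ℂ, tildeE u → ∀ z,
        (‖u z‖₊ : ℝ≥0∞) ≤ K * eLpNorm u p volume := by
      rcases eq_or_lt_of_le hpr1 with h1 | h1
      · have hp1 : p = 1 := by
          rw [← ENNReal.ofReal_toReal hp_top, ← h1]
          norm_num
        exact ⟨ENNReal.ofReal Real.pi⁻¹, ofReal_ne_top,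
          fun u hu z => by rw [hp1]; exact sup_bound_one hu z⟩
      · have hconj := Real.HolderConjugate.conjExponent h1
        set qr := Real.conjExponent p.toReal with hqrdef
        have hq0 : 0 < qr := hconj.symm.pos
        refine ⟨ENNReal.ofReal Real.pi⁻¹ * ENNReal.ofReal (Real.pi / (qr/2)) ^ (1/qr), ?_, ?_⟩
        · exact ENNReal.mul_ne_top ofReal_ne_top
            (ENNReal.rpow_ne_top_of_nonneg (by positivity) ENNReal.ofReal_ne_top)
        · intro u hu z
          have := sup_bound_gen hu hconj z
          rwa [ENNReal.ofReal_toReal hp_top] at this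
    by_cases hq_top : q = ⊤
    · refine ⟨K, hK, fun u hu => ?_⟩
      rw [hq_top]
      exact eLpNorm_top_le (hsup u hu)
    · have hqrlt : p.toReal < q.toReal :=
        (ENNReal.toReal_lt_toReal hp_top hq_top).mpr hplt
      have hK1 : K + 1 ≠ ⊤ := ENNReal.add_ne_top.mpr ⟨hK, one_ne_top⟩
      have hC_pos : (0:ℝ≥0∞) < (K + 1) ^ ((q.toReal - p.toReal)/q.toReal) :=
        ENNReal.rpow_pos (lt_of_lt_of_le zero_lt_one le_add_self) hK1
      refine ⟨(K + 1) ^ ((q.toReal - p.toReal)/q.toReal), ?_, fun u hu => ?_⟩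
      · exact ENNReal.rpow_ne_top_of_nonneg
          (by apply div_nonneg <;> linarith [hqrlt, hpr1,
            (lt_of_lt_of_le zero_lt_one hpr1).trans hqrlt]) hK1
      · by_cases hA : eLpNorm u p volume = ⊤
        · rw [hA, ENNReal.mul_top hC_pos.ne']
          exact le_top
        · have hsup' : ∀ z, (‖u z‖₊ : ℝ≥0∞)
              ≤ (K + 1) * eLpNorm u (ENNReal.ofReal p.toReal) volume := by
            intro z
            rw [ENNReal.ofReal_toReal hp_top]
            exact (hsup u hu z).trans (mul_le_mul_left le_self_add _)
          have hA' : eLpNorm u (ENNReal.ofReal p.toReal) volume ≠ ⊤ := by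
            rwa [ENNReal.ofReal_toReal hp_top]
          have := interp hK1 (lt_of_lt_of_le zero_lt_one hpr1) hqrlt hA' hsup'
          rwa [ENNReal.ofReal_toReal hp_top, ENNReal.ofReal_toReal hq_top] at this
  · intro u hu _
    have hconj2 : (2:ℝ).HolderConjugate 2 := by
      constructor <;> norm_num
    have hb := fun z => sup_bound_gen hu hconj2 z
    have hconst : ENNReal.ofReal Real.pi⁻¹ * ENNReal.ofReal (Real.pi / ((2:ℝ) / 2)) ^ (1/(2:ℝ))
        = ENNReal.ofReal (1 / Real.sqrt Real.pi) := by
      have h22 : Real.pi / ((2:ℝ)/2) = Real.pi := by norm_num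
      rw [h22, ENNReal.ofReal_rpow_of_nonneg Real.pi_pos.le (by norm_num),
        ← Real.sqrt_eq_rpow, ← ENNReal.ofReal_mul (by positivity)]
      congr 1
      rw [eq_div_iff (Real.sqrt_ne_zero'.mpr Real.pi_pos), mul_assoc,
        Real.mul_self_sqrt Real.pi_pos.le, inv_mul_cancel₀ Real.pi_ne_zero]
    have h2 : ENNReal.ofReal (2:ℝ) = (2 : ℝ≥0∞) := by
      norm_num
    refine eLpNorm_top_le fun z => ?_
    have := hb z
    rwa [hconst, h2] at this
end
end

section
/- For all complex numbers a, b, c, d for which the integral converges absolutely, (1/π) ∫_ℂ e^{-2|w|² + aw + b w̄ + cw² + d w̄²} dL(w) = (1/(2√(1-cd))) e^{(da² + cb² + 2ab)/(4(1-cd))}. -/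
open MeasureTheory Complex Real

noncomputable section

lemma not_integrable_exp_linear (q r : ℝ) :
    ¬ Integrable (fun y : ℝ => Real.exp (q * y + r)) := by
  intro hInt
  have hmar := hInt.measure_ge_lt_top (Real.exp_pos r)
  rcases le_or_gt 0 q with hq | hq
  · have hsub : Set.Ici (0 : ℝ) ⊆ {y | Real.exp r ≤ Real.exp (q * y + r)} := by
      intro y hy
      exact Real.exp_le_exp.2 (by nlinarith [Set.mem_Ici.1 hy])
    have := measure_mono (μ := volume) hsub
    rw [Real.volume_Ici] at this
    exact absurd (lt_of_le_of_lt this hmar) (lt_irrefl ⊤)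
  · have hsub : Set.Iic (0 : ℝ) ⊆ {y | Real.exp r ≤ Real.exp (q * y + r)} := by
      intro y hy
      exact Real.exp_le_exp.2 (by nlinarith [Set.mem_Iic.1 hy])
    have := measure_mono (μ := volume) hsub
    rw [Real.volume_Iic] at this
    exact absurd (lt_of_le_of_lt this hmar) (lt_irrefl ⊤)

lemma re_neg_of_integrable_cexp_quad {Q L M : ℂ}
    (h : Integrable (fun x : ℝ => Complex.exp (Q * (x:ℂ)^2 + L * (x:ℂ) + M))) : Q.re < 0 := by
  by_contra hQ
  push_neg at hQ
  have hn := h.norm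
  have heq : (fun x : ℝ => ‖Complex.exp (Q * (x:ℂ)^2 + L * (x:ℂ) + M)‖)
      = fun x : ℝ => Real.exp (Q.re * x^2 + L.re * x + M.re) := by
    funext x
    rw [Complex.norm_exp]
    congr 1
    simp [pow_two, Complex.mul_re, Complex.mul_im]
  rw [heq] at hn
  refine not_integrable_exp_linear L.re M.re (hn.mono' ?_ (ae_of_all _ fun x => ?_))
  · exact (Real.continuous_exp.comp
      ((continuous_const.mul continuous_id).add continuous_const)).aestronglyMeasurable
  · rw [Real.norm_eq_abs, abs_of_pos (Real.exp_pos _)]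
    exact Real.exp_le_exp.2 (by nlinarith [sq_nonneg x])

lemma mul_cpow_of_arg {x y : ℂ} (hx : x ≠ 0) (hy : y ≠ 0)
    (h : x.arg + y.arg ∈ Set.Ioc (-Real.pi) Real.pi) (s : ℂ) :
    (x * y) ^ s = x ^ s * y ^ s := by
  rw [Complex.cpow_def_of_ne_zero (mul_ne_zero hx hy), Complex.cpow_def_of_ne_zero hx,
    Complex.cpow_def_of_ne_zero hy, (Complex.log_mul_eq_add_log_iff hx hy).2 h, add_mul,
    Complex.exp_add]

lemma combine5 (p u : ℂ) (hppos : 0 < p.re) (hu0 : u ≠ 0) (hargu : u.arg ≠ Real.pi)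
    (hQpos : 0 < (4 * u / p).re) :
    ((Real.pi : ℂ) / p) ^ ((1:ℂ)/2) * ((Real.pi : ℂ) / (4 * u / p)) ^ ((1:ℂ)/2)
      = (Real.pi : ℂ) / (2 * u ^ ((1:ℂ)/2)) := by
  have hp0 : p ≠ 0 := fun h0 => by simp [h0] at hppos
  have hq0 : (4 * u / p) ≠ 0 := fun h0 => by simp [h0] at hQpos
  have hrex : 0 < ((Real.pi : ℂ) / p).re := by
    rw [div_eq_mul_inv, Complex.re_ofReal_mul, Complex.inv_re]
    exact mul_pos Real.pi_pos (div_pos hppos (Complex.normSq_pos.2 hp0))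
  have hrey : 0 < ((Real.pi : ℂ) / (4 * u / p)).re := by
    rw [div_eq_mul_inv, Complex.re_ofReal_mul, Complex.inv_re]
    exact mul_pos Real.pi_pos (div_pos hQpos (Complex.normSq_pos.2 hq0))
  have hx0 : ((Real.pi : ℂ) / p) ≠ 0 := fun h0 => by simp [h0] at hrex
  have hy0 : ((Real.pi : ℂ) / (4 * u / p)) ≠ 0 := fun h0 => by simp [h0] at hrey
  have hargx := Complex.abs_arg_lt_pi_div_two_iff.2 (Or.inl hrex)
  have hargy := Complex.abs_arg_lt_pi_div_two_iff.2 (Or.inl hrey)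
  rw [abs_lt] at hargx hargy
  rw [← mul_cpow_of_arg hx0 hy0 ⟨by linarith [hargx.1, hargy.1],
    le_of_lt (by linarith [hargx.2, hargy.2])⟩]
  have hxy : ((Real.pi : ℂ) / p) * ((Real.pi : ℂ) / (4 * u / p))
      = ((Real.pi ^ 2 / 4 : ℝ) : ℂ) * u⁻¹ := by
    push_cast
    field_simp
  rw [hxy]
  have hc0 : ((Real.pi ^ 2 / 4 : ℝ) : ℂ) ≠ 0 := by
    rw [ne_eq, Complex.ofReal_eq_zero]
    positivity
  have hargc : ((Real.pi ^ 2 / 4 : ℝ) : ℂ).arg = 0 := Complex.arg_ofReal_of_nonneg (by positivity)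
  have harginv : (u⁻¹).arg = -u.arg := by rw [Complex.arg_inv, if_neg hargu]
  have hultpi : u.arg < Real.pi := lt_of_le_of_ne (Complex.arg_le_pi u) hargu
  rw [mul_cpow_of_arg hc0 (inv_ne_zero hu0)
    ⟨by rw [hargc, harginv]; linarith, by rw [hargc, harginv]; linarith [Complex.neg_pi_lt_arg u]⟩]
  rw [Complex.inv_cpow _ _ hargu]
  rw [show ((1:ℂ)/2) = ((1/2 : ℝ) : ℂ) by norm_num]
  rw [← Complex.ofReal_cpow (by positivity)]
  rw [show (Real.pi ^ 2 / 4) ^ ((1:ℝ)/2) = Real.pi / 2 by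
    rw [← Real.sqrt_eq_rpow, show Real.pi^2/4 = (Real.pi/2)^2 by ring,
      Real.sqrt_sq (by positivity)]]
  have hs0 : u ^ (((1/2 : ℝ) : ℂ)) ≠ 0 := by
    simp only [ne_eq, Complex.cpow_eq_zero_iff, not_and_or, not_not]
    left; exact hu0
  push_cast
  field_simp

/-- integrand on ℝ², with the exponent organized as a quadratic in y. -/
def F5 (a b c d : ℂ) (x y : ℝ) : ℂ :=
  Complex.exp (-(2+c+d) * (y:ℂ)^2 + (2*I*(c-d)*(x:ℂ) + I*(a-b)) * (y:ℂ)
    + ((-2+c+d)*(x:ℂ)^2 + (a+b)*(x:ℂ)))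

lemma key5 (a b c d : ℂ) (x y : ℝ) :
    Complex.exp (-2 * ((‖((x:ℂ) + (y:ℂ)*I)‖ ^ 2 : ℝ) : ℂ) + a * ((x:ℂ) + (y:ℂ)*I)
      + b * (starRingEnd ℂ) ((x:ℂ)+(y:ℂ)*I) + c * ((x:ℂ)+(y:ℂ)*I) ^ 2
      + d * ((starRingEnd ℂ) ((x:ℂ)+(y:ℂ)*I)) ^ 2) = F5 a b c d x y := by
  rw [F5]
  congr 1
  have h1 : ‖(x:ℂ) + (y:ℂ) * I‖^2 = x^2 + y^2 := by
    rw [Complex.sq_norm, Complex.normSq_add_mul_I]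
  rw [h1]
  have h2 : (starRingEnd ℂ) ((x:ℂ) + (y:ℂ) * I) = (x:ℂ) - (y:ℂ) * I := by
    rw [map_add, map_mul, Complex.conj_ofReal, Complex.conj_ofReal, Complex.conj_I]
    ring
  rw [h2]
  push_cast
  linear_combination (c + d) * (y:ℂ)^2 * Complex.I_sq

/-- Gaussian integral identity:
(1/π) ∫ e^{-2|w|² + aw + b w̄ + cw² + d w̄²} dL(w) = e^{(da²+cb²+2ab)/(4(1-cd))} / (2√(1-cd)). -/
theorem stmt5 (a b c d : ℂ)
    (h : Integrable (fun w : ℂ =>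
      Complex.exp (-2 * ((‖w‖ ^ 2 : ℝ) : ℂ) + a * w + b * (starRingEnd ℂ) w
        + c * w ^ 2 + d * ((starRingEnd ℂ) w) ^ 2))) :
    (Real.pi : ℂ)⁻¹ * ∫ w : ℂ,
        Complex.exp (-2 * ((‖w‖ ^ 2 : ℝ) : ℂ) + a * w + b * (starRingEnd ℂ) w
          + c * w ^ 2 + d * ((starRingEnd ℂ) w) ^ 2)
      = 1 / (2 * (1 - c * d) ^ ((1 : ℂ) / 2))
        * Complex.exp ((d * a ^ 2 + c * b ^ 2 + 2 * a * b) / (4 * (1 - c * d))) := by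
  have hmp : MeasurePreserving Complex.measurableEquivRealProd.symm volume volume :=
    Complex.volume_preserving_equiv_real_prod.symm Complex.measurableEquivRealProd
  have hcomp : ∀ q : ℝ × ℝ, (fun w : ℂ =>
      Complex.exp (-2 * ((‖w‖ ^ 2 : ℝ) : ℂ) + a * w + b * (starRingEnd ℂ) w
        + c * w ^ 2 + d * ((starRingEnd ℂ) w) ^ 2)) (Complex.measurableEquivRealProd.symm q)
      = F5 a b c d q.1 q.2 := by
    intro q
    rw [Complex.measurableEquivRealProd_symm_apply, Complex.mk_eq_add_mul_I]
    exact key5 a b c d q.1 q.2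
  have hint2 : Integrable (Function.uncurry (F5 a b c d)) (volume.prod volume) := by
    have h' := (hmp.integrable_comp_emb
      Complex.measurableEquivRealProd.symm.measurableEmbedding).2 h
    rw [← MeasureTheory.Measure.volume_eq_prod]
    exact h'.congr (ae_of_all _ fun q => hcomp q)
  have volInt : (∫ w : ℂ, Complex.exp (-2 * ((‖w‖ ^ 2 : ℝ) : ℂ) + a * w
        + b * (starRingEnd ℂ) w + c * w ^ 2 + d * ((starRingEnd ℂ) w) ^ 2))
      = ∫ x : ℝ, ∫ y : ℝ, F5 a b c d x y := by
    rw [← hmp.integral_comp Complex.measurableEquivRealProd.symm.measurableEmbedding]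
    rw [MeasureTheory.Measure.volume_eq_prod, MeasureTheory.integral_integral hint2]
    exact integral_congr_ae (ae_of_all _ fun q => hcomp q)
  -- condition (1): Re(2+c+d) > 0
  have hβre : (-(2+c+d) : ℂ).re < 0 := by
    obtain ⟨x, hx⟩ := hint2.prod_right_ae.exists
    exact re_neg_of_integrable_cexp_quad
      (Q := -(2+c+d)) (L := 2*I*(c-d)*(x:ℂ) + I*(a-b)) (M := (-2+c+d)*(x:ℂ)^2 + (a+b)*(x:ℂ)) hx
  have hpre : 0 < (2 + c + d : ℂ).re := by
    rw [Complex.neg_re] at hβre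
    linarith
  have hp0 : (2 + c + d : ℂ) ≠ 0 := fun h0 => by simp [h0] at hpre
  -- inner integral
  have hInner : ∀ x : ℝ, (∫ y : ℝ, F5 a b c d x y)
      = ((Real.pi : ℂ) / (2 + c + d)) ^ ((1:ℂ)/2)
        * Complex.exp ((-(4 * (1 - c * d) / (2 + c + d))) * (x:ℂ)^2
          + (2 * (a + b + a * d + b * c) / (2 + c + d)) * (x:ℂ)
          + (-(a - b)^2 / (4 * (2 + c + d)))) := by
    intro x
    rw [show (fun y : ℝ => F5 a b c d x y) = fun y : ℝ =>
      Complex.exp (-(2+c+d) * (y:ℂ)^2 + (2*I*(c-d)*(x:ℂ) + I*(a-b)) * (y:ℂ)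
        + ((-2+c+d)*(x:ℂ)^2 + (a+b)*(x:ℂ))) from rfl]
    rw [integral_cexp_quadratic hβre, neg_neg]
    congr 1
    have hC2 : (2*I*(c-d)*(x:ℂ) + I*(a-b)) ^ 2 = -(2 * (c - d) * (x:ℂ) + (a - b))^2 := by
      linear_combination (2 * (c - d) * (x:ℂ) + (a - b))^2 * Complex.I_sq
    rw [hC2]
    congr 1
    rw [mul_neg, neg_div_neg_eq]
    field_simp
    ring
  -- condition (2): Re(4(1-cd)/(2+c+d)) > 0
  have hS₁0 : ((Real.pi : ℂ) / (2 + c + d)) ^ ((1:ℂ)/2) ≠ 0 := by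
    simp only [ne_eq, Complex.cpow_eq_zero_iff, not_and_or, not_not]
    left
    exact div_ne_zero (Complex.ofReal_ne_zero.2 Real.pi_ne_zero) hp0
  have hgInt : Integrable (fun x : ℝ => ((Real.pi : ℂ) / (2 + c + d)) ^ ((1:ℂ)/2)
      * Complex.exp ((-(4 * (1 - c * d) / (2 + c + d))) * (x:ℂ)^2
        + (2 * (a + b + a * d + b * c) / (2 + c + d)) * (x:ℂ)
        + (-(a - b)^2 / (4 * (2 + c + d))))) := by
    have h' := hint2.integral_prod_left
    exact h'.congr (ae_of_all _ fun x => hInner x)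
  have hQre : (-(4 * (1 - c * d) / (2 + c + d)) : ℂ).re < 0 := by
    apply re_neg_of_integrable_cexp_quad (L := 2 * (a + b + a * d + b * c) / (2 + c + d))
      (M := -(a - b)^2 / (4 * (2 + c + d)))
    have h2 := hgInt.const_mul (((Real.pi : ℂ) / (2 + c + d)) ^ ((1:ℂ)/2))⁻¹
    refine h2.congr (ae_of_all _ fun x => ?_)
    beta_reduce
    rw [← mul_assoc, inv_mul_cancel₀ hS₁0, one_mul]
  have hu0 : (1 - c * d : ℂ) ≠ 0 := by
    intro h0
    rw [h0] at hQre
    simp at hQre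
  have hargu : (1 - c * d : ℂ).arg ≠ Real.pi := by
    intro hπ
    obtain ⟨hre, him⟩ := Complex.arg_eq_pi_iff.1 hπ
    have hueq : (1 - c * d : ℂ) = (((1 - c * d : ℂ).re : ℝ) : ℂ) := by
      apply Complex.ext <;> simp [him]
    have hQeq : (-(4 * (1 - c * d) / (2 + c + d)) : ℂ)
        = ((4 * (1 - c * d : ℂ).re : ℝ) : ℂ) * (-(2 + c + d)⁻¹) := by
      nth_rewrite 1 [hueq]
      push_cast
      field_simp
    rw [hQeq, Complex.re_ofReal_mul, Complex.neg_re, Complex.inv_re] at hQre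
    have hnormSq : 0 < Complex.normSq (2 + c + d) := Complex.normSq_pos.2 hp0
    nlinarith [mul_pos (mul_pos (by norm_num : (0:ℝ) < 4) (neg_pos.2 hre)) (div_pos hpre hnormSq)]
  have hQpos : 0 < ((4 * (1 - c * d) / (2 + c + d)) : ℂ).re := by
    rw [Complex.neg_re] at hQre
    linarith
  -- outer integral
  rw [volInt]
  simp only [hInner]
  rw [MeasureTheory.integral_const_mul]
  rw [integral_cexp_quadratic hQre, neg_neg]
  have hcomb := combine5 (2+c+d) (1-c*d) hpre hu0 hargu hQpos
  have hT : (-(a - b)^2 / (4 * (2 + c + d)))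
      - (2 * (a + b + a * d + b * c) / (2 + c + d))^2
        / (4 * (-(4 * (1 - c * d) / (2 + c + d))))
      = (d * a ^ 2 + c * b ^ 2 + 2 * a * b) / (4 * (1 - c * d)) := by
    rw [mul_neg, div_neg, sub_neg_eq_add]
    rw [show (4:ℂ) * (4 * (1 - c * d) / (2 + c + d)) = 16 * (1 - c * d) / (2 + c + d) by ring]
    rw [div_div_eq_mul_div, div_pow]
    field_simp
    ring
  rw [hT]
  rw [show (Real.pi : ℂ)⁻¹ * (((Real.pi : ℂ) / (2 + c + d)) ^ ((1:ℂ)/2)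
      * (((Real.pi : ℂ) / (4 * (1 - c * d) / (2 + c + d))) ^ ((1:ℂ)/2)
        * Complex.exp ((d * a ^ 2 + c * b ^ 2 + 2 * a * b) / (4 * (1 - c * d)))))
    = (((Real.pi : ℂ) / (2 + c + d)) ^ ((1:ℂ)/2)
        * ((Real.pi : ℂ) / (4 * (1 - c * d) / (2 + c + d))) ^ ((1:ℂ)/2))
      * ((Real.pi : ℂ)⁻¹
        * Complex.exp ((d * a ^ 2 + c * b ^ 2 + 2 * a * b) / (4 * (1 - c * d)))) by ring]
  rw [hcomb]
  have hπ0 : (Real.pi : ℂ) ≠ 0 := Complex.ofReal_ne_zero.2 Real.pi_ne_zero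
  have hs0 : (1 - c * d : ℂ) ^ ((1:ℂ)/2) ≠ 0 := by
    simp only [ne_eq, Complex.cpow_eq_zero_iff, not_and_or, not_not]
    left; exact hu0
  field_simp
end
end

section
/- Let A₁, A₂ ∈ ℂ with |A₁| < 1/2, |A₂| < 1/2, satisfying (A₁+A₂)/(4(1-(A₁+A₂)Ā₂)) = A₁ and (A₁+A₂)/(4(1-(A₁+A₂)Ā₁)) = A₂. Then A₁ = A₂ = 0. -/
open Complex

noncomputable section

/-- If |A₁|,|A₂| < 1/2 and (A₁+A₂)/(4(1-(A₁+A₂)Ā₂)) = A₁, (A₁+A₂)/(4(1-(A₁+A₂)Ā₁)) = A₂,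
then A₁ = A₂ = 0. -/
theorem stmt7 (A₁ A₂ : ℂ) (h₁ : ‖A₁‖ < 1 / 2) (h₂ : ‖A₂‖ < 1 / 2)
    (e₁ : (A₁ + A₂) / (4 * (1 - (A₁ + A₂) * (starRingEnd ℂ) A₂)) = A₁)
    (e₂ : (A₁ + A₂) / (4 * (1 - (A₁ + A₂) * (starRingEnd ℂ) A₁)) = A₂) :
    A₁ = 0 ∧ A₂ = 0 := by
  have habsS : ‖A₁ + A₂‖ < 1 := by
    calc ‖A₁ + A₂‖ ≤ ‖A₁‖ + ‖A₂‖ := norm_add_le _ _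
    _ < 1 := by linarith
  have hne : ∀ B : ℂ, ‖B‖ < 1/2 → 1 - (A₁ + A₂) * (starRingEnd ℂ) B ≠ 0 := by
    intro B hB h
    have h' : (A₁ + A₂) * (starRingEnd ℂ) B = 1 := by linear_combination -h
    have hlt : ‖(A₁ + A₂) * (starRingEnd ℂ) B‖ < 1 := by
      rw [norm_mul, Complex.norm_conj]
      nlinarith [norm_nonneg (A₁ + A₂), norm_nonneg B]
    rw [h'] at hlt
    simp at hlt
  have hd₂ := hne A₂ h₂
  have hd₁ := hne A₁ h₁
  have hE1 : A₁ + A₂ = A₁ * (4 * (1 - (A₁ + A₂) * (starRingEnd ℂ) A₂)) :=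
    (div_eq_iff (by exact mul_ne_zero (by norm_num) hd₂)).mp e₁
  have hE2 : A₁ + A₂ = A₂ * (4 * (1 - (A₁ + A₂) * (starRingEnd ℂ) A₁)) :=
    (div_eq_iff (by exact mul_ne_zero (by norm_num) hd₁)).mp e₂
  have hzero : (A₁ + A₂) * (1 - 2 * (A₁ * (starRingEnd ℂ) A₂ + A₂ * (starRingEnd ℂ) A₁)) = 0 := by
    linear_combination (-(1:ℂ)/2) * hE1 + (-(1:ℂ)/2) * hE2
  have hXne : 1 - 2 * (A₁ * (starRingEnd ℂ) A₂ + A₂ * (starRingEnd ℂ) A₁) ≠ 0 := by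
    intro h
    have h' : 2 * (A₁ * (starRingEnd ℂ) A₂ + A₂ * (starRingEnd ℂ) A₁) = 1 := by
      linear_combination -h
    have hlt : ‖2 * (A₁ * (starRingEnd ℂ) A₂ + A₂ * (starRingEnd ℂ) A₁)‖ < 1 := by
      have hle : ‖A₁ * (starRingEnd ℂ) A₂ + A₂ * (starRingEnd ℂ) A₁‖
          ≤ ‖A₁‖ * ‖A₂‖ + ‖A₂‖ * ‖A₁‖ := by
        calc ‖A₁ * (starRingEnd ℂ) A₂ + A₂ * (starRingEnd ℂ) A₁‖
            ≤ ‖A₁ * (starRingEnd ℂ) A₂‖ + ‖A₂ * (starRingEnd ℂ) A₁‖ :=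
              norm_add_le _ _
        _ = ‖A₁‖ * ‖A₂‖ + ‖A₂‖ * ‖A₁‖ := by
              rw [norm_mul, norm_mul, Complex.norm_conj, Complex.norm_conj]
      rw [norm_mul]
      simp only [Complex.norm_two]
      nlinarith [norm_nonneg A₁, norm_nonneg A₂]
    rw [h'] at hlt
    simp at hlt
  have hS : A₁ + A₂ = 0 := by
    rcases mul_eq_zero.mp hzero with h | h
    · exact h
    · exact absurd h hXne
  have hA1 : A₁ = 0 := by
    rw [hS, zero_div] at e₁
    exact e₁.symm
  exact ⟨hA1, by linear_combination hS - hA1⟩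
end
end
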